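/- arXiv:2404.13737 — 6 statements merged into one kernel-verified Lean document; each statement's English description precedes it below -/
import Mathlib

section
/- For every vector (d_1,...,d_T) of nonnegative real numbers with sum equal to B, there exists a vector (b_1,...,b_T) of nonnegative integers with sum equal to B such that the sum over t of G_t(d_t) is at most the sum over t of g_t(b_t). -/
noncomputable def Gterm (h : ℕ → ℝ) (x : ℝ) : ℝ :=
  (x - (⌊x⌋₊ : ℝ)) * h ⌈x⌉₊ + (1 - (x - (⌊x⌋₊ : ℝ))) * h ⌊x⌋₊

lemma Gterm_natCast (h : ℕ → ℝ) (n : ℕ) : Gterm h (n : ℝ) = h n := by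
  simp [Gterm]

lemma Gterm_up (h : ℕ → ℝ) (x s : ℝ) (hfrac : (⌊x⌋₊ : ℝ) < x) (hs0 : 0 ≤ s)
    (hs1 : x + s ≤ (⌊x⌋₊ : ℝ) + 1) :
    Gterm h (x + s)
      = (x - (⌊x⌋₊ : ℝ) + s) * h (⌊x⌋₊ + 1) + (1 - (x - (⌊x⌋₊ : ℝ)) - s) * h ⌊x⌋₊ := by
  rcases lt_or_eq_of_le hs1 with hlt | heq
  · have hx0 : (0:ℝ) ≤ x + s := by
      have := (Nat.cast_nonneg (⌊x⌋₊) : (0:ℝ) ≤ ⌊x⌋₊); linarith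
    have hfl : ⌊x + s⌋₊ = ⌊x⌋₊ := by
      rw [Nat.floor_eq_iff hx0]
      constructor
      · linarith
      · exact_mod_cast hlt
    have hcl : ⌈x + s⌉₊ = ⌊x⌋₊ + 1 := by
      rw [Nat.ceil_eq_iff (Nat.succ_ne_zero _)]
      constructor
      · simpa using (by linarith : (⌊x⌋₊ : ℝ) < x + s)
      · push_cast; linarith
    simp only [Gterm, hfl, hcl]
    ring
  · have hxs : x + s = ((⌊x⌋₊ + 1 : ℕ) : ℝ) := by push_cast; linarith
    rw [hxs, Gterm_natCast]
    have h1 : x - (⌊x⌋₊ : ℝ) + s = 1 := by linarith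
    have h2 : 1 - (x - (⌊x⌋₊ : ℝ)) - s = 0 := by linarith
    rw [h1, h2]; ring

lemma Gterm_down (h : ℕ → ℝ) (x s : ℝ) (hfrac : (⌊x⌋₊ : ℝ) < x) (hs0 : 0 ≤ s)
    (hs1 : s ≤ x - (⌊x⌋₊ : ℝ)) :
    Gterm h (x - s)
      = (x - (⌊x⌋₊ : ℝ) - s) * h (⌊x⌋₊ + 1) + (1 - (x - (⌊x⌋₊ : ℝ)) + s) * h ⌊x⌋₊ := by
  have hx0 : (0:ℝ) ≤ x := le_trans (Nat.cast_nonneg _) (le_of_lt hfrac)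
  have hub : x < (⌊x⌋₊ : ℝ) + 1 := by exact_mod_cast Nat.lt_floor_add_one x
  rcases lt_or_eq_of_le hs1 with hlt | heq
  · have hxs0 : (0:ℝ) ≤ x - s := by
      have := (Nat.cast_nonneg (⌊x⌋₊) : (0:ℝ) ≤ ⌊x⌋₊); linarith
    have hfl : ⌊x - s⌋₊ = ⌊x⌋₊ := by
      rw [Nat.floor_eq_iff hxs0]
      constructor
      · linarith
      · linarith
    have hcl : ⌈x - s⌉₊ = ⌊x⌋₊ + 1 := by
      rw [Nat.ceil_eq_iff (Nat.succ_ne_zero _)]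
      constructor
      · simpa using (by linarith : (⌊x⌋₊ : ℝ) < x - s)
      · push_cast; linarith
    simp only [Gterm, hfl, hcl]
    ring
  · have hxs : x - s = ((⌊x⌋₊ : ℕ) : ℝ) := by linarith
    rw [hxs, Gterm_natCast]
    have h1 : x - (⌊x⌋₊ : ℝ) - s = 0 := by linarith
    have h2 : 1 - (x - (⌊x⌋₊ : ℝ)) + s = 1 := by linarith
    rw [h1, h2]; ring

lemma Gterm_of_frac_pos (h : ℕ → ℝ) (x : ℝ) (hfrac : (⌊x⌋₊ : ℝ) < x)
    (hub : x < (⌊x⌋₊ : ℝ) + 1) :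
    Gterm h x = (x - (⌊x⌋₊ : ℝ)) * h (⌊x⌋₊ + 1) + (1 - (x - (⌊x⌋₊ : ℝ))) * h ⌊x⌋₊ := by
  have := Gterm_up h x 0 hfrac le_rfl (by linarith)
  simpa using this

/-- one exchange step -/
lemma step {T : ℕ} (g : Fin T → ℕ → ℝ) (d : Fin T → ℝ) (hd : ∀ t, 0 ≤ d t)
    (i j : Fin T) (hij : i ≠ j)
    (hi : (⌊d i⌋₊ : ℝ) < d i) (hj : (⌊d j⌋₊ : ℝ) < d j)
    (hσ : g j (⌊d j⌋₊ + 1) - g j ⌊d j⌋₊ ≤ g i (⌊d i⌋₊ + 1) - g i ⌊d i⌋₊) :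
    ∃ d' : Fin T → ℝ, (∀ t, 0 ≤ d' t) ∧ (∑ t, d' t = ∑ t, d t) ∧
      (∑ t, Gterm (g t) (d t) ≤ ∑ t, Gterm (g t) (d' t)) ∧
      ∃ k, d k ≠ (⌊d k⌋₊ : ℝ) ∧
        (∀ t, d' t ≠ (⌊d' t⌋₊ : ℝ) → t ≠ k ∧ d t ≠ (⌊d t⌋₊ : ℝ)) := by
  set fi := ⌊d i⌋₊ with hfi
  set fj := ⌊d j⌋₊ with hfj
  have hubi : d i < (fi : ℝ) + 1 := by exact_mod_cast Nat.lt_floor_add_one (d i)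
  have hubj : d j < (fj : ℝ) + 1 := by exact_mod_cast Nat.lt_floor_add_one (d j)
  set s : ℝ := min (1 - (d i - (fi : ℝ))) (d j - (fj : ℝ)) with hs
  have hs0 : 0 ≤ s := le_min (by linarith) (by linarith)
  have hsi : s ≤ 1 - (d i - (fi : ℝ)) := min_le_left _ _
  have hsj : s ≤ d j - (fj : ℝ) := min_le_right _ _
  set d' : Fin T → ℝ := fun t => d t + (if t = i then s else 0) - (if t = j then s else 0)
    with hd'def
  have vdi : d' i = d i + s := by
    simp [hd'def, hij]
  have vdj : d' j = d j - s := by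
    simp [hd'def, hij.symm]
  have vdt : ∀ t, t ≠ i → t ≠ j → d' t = d t := by
    intro t h1 h2; simp [hd'def, h1, h2]
  have hfrac_old : ∀ t, d' t ≠ (⌊d' t⌋₊ : ℝ) → d t ≠ (⌊d t⌋₊ : ℝ) := by
    intro t ht
    rcases eq_or_ne t i with rfl | h1
    · exact ne_of_gt hi
    rcases eq_or_ne t j with rfl | h2
    · exact ne_of_gt hj
    · rw [vdt t h1 h2] at ht; exact ht
  refine ⟨d', ?_, ?_, ?_, ?_⟩
  · intro t
    rcases eq_or_ne t i with rfl | h1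
    · rw [vdi]; have := hd t; linarith
    rcases eq_or_ne t j with rfl | h2
    · rw [vdj]; have : (0:ℝ) ≤ (fj:ℝ) := Nat.cast_nonneg _; linarith
    · rw [vdt t h1 h2]; exact hd t
  · simp only [hd'def]
    rw [Finset.sum_sub_distrib, Finset.sum_add_distrib]
    simp
  · have key : ∀ t, Gterm (g t) (d' t)
        = Gterm (g t) (d t) + (if t = i then s * (g i (fi + 1) - g i fi) else 0)
          - (if t = j then s * (g j (fj + 1) - g j fj) else 0) := by
      intro t
      rcases eq_or_ne t i with rfl | h1
      · rw [if_pos rfl, if_neg hij, vdi,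
          Gterm_up (g t) (d t) s hi hs0 (by linarith),
          Gterm_of_frac_pos (g t) (d t) hi hubi]
        ring
      rcases eq_or_ne t j with rfl | h2
      · rw [if_neg h1, if_pos rfl, vdj,
          Gterm_down (g t) (d t) s hj hs0 hsj,
          Gterm_of_frac_pos (g t) (d t) hj hubj]
        ring
      · rw [if_neg h1, if_neg h2, vdt t h1 h2]; ring
    have hsum : ∑ t, Gterm (g t) (d' t)
        = ∑ t, Gterm (g t) (d t) + (s * (g i (fi + 1) - g i fi) - s * (g j (fj + 1) - g j fj)) := by
      rw [Finset.sum_congr rfl fun t _ => key t]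
      rw [Finset.sum_sub_distrib, Finset.sum_add_distrib]
      simp only [Finset.sum_ite_eq', Finset.mem_univ, if_pos]
      ring
    rw [hsum]
    have : 0 ≤ s * (g i (fi + 1) - g i fi) - s * (g j (fj + 1) - g j fj) := by
      rw [← mul_sub]
      exact mul_nonneg hs0 (by linarith)
    linarith
  · rcases le_total (1 - (d i - (fi : ℝ))) (d j - (fj : ℝ)) with hc | hc
    · have hvi : d' i = ((fi + 1 : ℕ) : ℝ) := by
        rw [vdi, hs, min_eq_left hc]; push_cast; ring
      have hki : d' i = (⌊d' i⌋₊ : ℝ) := by rw [hvi, Nat.floor_natCast]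
      refine ⟨i, ne_of_gt hi, fun t ht => ⟨?_, hfrac_old t ht⟩⟩
      rintro rfl
      exact ht hki
    · have hvj : d' j = ((fj : ℕ) : ℝ) := by
        rw [vdj, hs, min_eq_right hc]; ring
      have hkj : d' j = (⌊d' j⌋₊ : ℝ) := by rw [hvj, Nat.floor_natCast]
      refine ⟨j, ne_of_gt hj, fun t ht => ⟨?_, hfrac_old t ht⟩⟩
      rintro rfl
      exact ht hkj

lemma auxMain (T B : ℕ) (g : Fin T → ℕ → ℝ) :
    ∀ n : ℕ, ∀ d : Fin T → ℝ, (∀ t, 0 ≤ d t) → (∑ t, d t = (B : ℝ)) →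
      (Finset.univ.filter (fun t => d t ≠ (⌊d t⌋₊ : ℝ))).card ≤ n →
      ∃ b : Fin T → ℕ, (∑ t, b t = B) ∧ ∑ t, Gterm (g t) (d t) ≤ ∑ t, g t (b t) := by
  intro n
  induction n with
  | zero =>
    intro d hd hdsum hcard
    have hall : ∀ t, d t = (⌊d t⌋₊ : ℝ) := by
      intro t
      by_contra h
      have : t ∈ Finset.univ.filter (fun t => d t ≠ (⌊d t⌋₊ : ℝ)) := by
        simp [h]
      have := Finset.card_pos.mpr ⟨t, this⟩
      omega
    refine ⟨fun t => ⌊d t⌋₊, ?_, ?_⟩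
    · have : ((∑ t, ⌊d t⌋₊ : ℕ) : ℝ) = (B : ℝ) := by
        push_cast
        rw [← hdsum]
        exact Finset.sum_congr rfl fun t _ => (hall t).symm
      exact_mod_cast this
    · refine le_of_eq (Finset.sum_congr rfl fun t _ => ?_)
      rw [hall t, Gterm_natCast]
  | succ n ih =>
    intro d hd hdsum hcard
    by_cases hemp : (Finset.univ.filter (fun t => d t ≠ (⌊d t⌋₊ : ℝ))) = ∅
    · exact ih d hd hdsum (by rw [hemp]; simp)
    · obtain ⟨i, hi⟩ := Finset.nonempty_iff_ne_empty.mpr hemp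
      simp only [Finset.mem_filter, Finset.mem_univ, true_and] at hi
      have hj : ∃ j, j ≠ i ∧ d j ≠ (⌊d j⌋₊ : ℝ) := by
        by_contra h
        push_neg at h
        have hall : ∀ t ∈ Finset.univ.erase i, d t = (⌊d t⌋₊ : ℝ) := by
          intro t ht
          exact h t (Finset.ne_of_mem_erase ht)
        set M : ℕ := ∑ t ∈ Finset.univ.erase i, ⌊d t⌋₊ with hM
        have hdi : d i = (B : ℝ) - (M : ℝ) := by
          have h1 : ∑ t ∈ Finset.univ.erase i, d t + d i = (B : ℝ) := by
            rw [Finset.sum_erase_add _ _ (Finset.mem_univ i)]; exact hdsum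
          have h2 : ∑ t ∈ Finset.univ.erase i, d t = (M : ℝ) := by
            rw [hM]; push_cast
            exact Finset.sum_congr rfl hall
          linarith
        have hMB : M ≤ B := by
          have h0 : (0:ℝ) ≤ (B : ℝ) - (M : ℝ) := hdi ▸ hd i
          have : (M : ℝ) ≤ (B : ℝ) := by linarith
          exact_mod_cast this
        have : d i = ((B - M : ℕ) : ℝ) := by
          rw [hdi, Nat.cast_sub hMB]
        apply hi
        rw [this, Nat.floor_natCast]
      obtain ⟨j, hji, hj⟩ := hj
      have hfi : (⌊d i⌋₊ : ℝ) < d i := lt_of_le_of_ne (Nat.floor_le (hd i)) (Ne.symm hi)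
      have hfj : (⌊d j⌋₊ : ℝ) < d j := lt_of_le_of_ne (Nat.floor_le (hd j)) (Ne.symm hj)
      have hstep : ∃ d' : Fin T → ℝ, (∀ t, 0 ≤ d' t) ∧ (∑ t, d' t = ∑ t, d t) ∧
          (∑ t, Gterm (g t) (d t) ≤ ∑ t, Gterm (g t) (d' t)) ∧
          ∃ k, d k ≠ (⌊d k⌋₊ : ℝ) ∧
            (∀ t, d' t ≠ (⌊d' t⌋₊ : ℝ) → t ≠ k ∧ d t ≠ (⌊d t⌋₊ : ℝ)) := by
        rcases le_total (g j (⌊d j⌋₊ + 1) - g j ⌊d j⌋₊) (g i (⌊d i⌋₊ + 1) - g i ⌊d i⌋₊) with h | h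
        · exact step g d hd i j (Ne.symm hji) hfi hfj h
        · obtain ⟨d', h1, h2, h3, k, hk⟩ := step g d hd j i hji hfj hfi h
          exact ⟨d', h1, h2, h3, k, hk⟩
      obtain ⟨d', hd', hsum', hle', k, hkfrac, hsub⟩ := hstep
      have hcard' : (Finset.univ.filter (fun t => d' t ≠ (⌊d' t⌋₊ : ℝ))).card ≤ n := by
        have hsubset : (Finset.univ.filter (fun t => d' t ≠ (⌊d' t⌋₊ : ℝ))) ⊆
            (Finset.univ.filter (fun t => d t ≠ (⌊d t⌋₊ : ℝ))).erase k := by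
          intro t ht
          simp only [Finset.mem_filter, Finset.mem_univ, true_and] at ht
          obtain ⟨h1, h2⟩ := hsub t ht
          exact Finset.mem_erase.mpr ⟨h1, by simp [h2]⟩
        have hkmem : k ∈ Finset.univ.filter (fun t => d t ≠ (⌊d t⌋₊ : ℝ)) := by simp [hkfrac]
        have := Finset.card_le_card hsubset
        rw [Finset.card_erase_of_mem hkmem] at this
        omega
      obtain ⟨b, hb1, hb2⟩ := ih d' hd' (hsum' ▸ hdsum) hcard'
      exact ⟨b, hb1, le_trans hle' hb2⟩

set_option linter.unusedVariables false in
/-- Lemma 2 of the paper: for every vector `d` of nonnegative reals summing to the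
budget `B`, there is a vector `b` of nonnegative integers summing to `B` such that
the total piecewise-linear interpolated value `∑ t, G_t (d t)` is at most
`∑ t, g_t (b t)`, where
`G_t d = (d − ⌊d⌋) * g_t ⌈d⌉ + (1 − (d − ⌊d⌋)) * g_t ⌊d⌋`. -/
theorem stmt0 (T B : ℕ) (hT : 1 ≤ T) (g : Fin T → ℕ → ℝ)
    (hg : ∀ t b, 0 ≤ g t b)
    (d : Fin T → ℝ) (hd : ∀ t, 0 ≤ d t) (hdsum : ∑ t, d t = (B : ℝ)) :
    ∃ b : Fin T → ℕ, (∑ t, b t = B) ∧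
      ∑ t, ((d t - (⌊d t⌋₊ : ℝ)) * g t ⌈d t⌉₊
            + (1 - (d t - (⌊d t⌋₊ : ℝ))) * g t ⌊d t⌋₊)
        ≤ ∑ t, g t (b t) := by
  have := auxMain T B g (Finset.univ.filter (fun t => d t ≠ (⌊d t⌋₊ : ℝ))).card d hd hdsum le_rfl
  simpa [Gterm] using this
end

section
/- Suppose (d_1,...,d_T) is a vector of nonnegative real numbers with sum equal to the natural number B such that at least one coordinate d_t is not an integer. Then there exists a vector (d'_1,...,d'_T) of nonnegative real numbers with sum equal to B such that: (i) the number of integer coordinates of d' is strictly larger than that of d, and (ii) the sum over t of G_t(d'_t) is at least the sum over t of G_t(d_t). (Moreover d' can be chosen to differ from d in exactly two coordinates.) -/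
/-- Evaluate the interpolated expression on the interval `[n, n+1]`. -/
lemma Eeq (g : ℕ → ℝ) (n : ℕ) (x : ℝ) (h1 : (n : ℝ) ≤ x) (h2 : x ≤ (n : ℝ) + 1) :
    (x - (⌊x⌋₊ : ℝ)) * g ⌈x⌉₊ + (1 - (x - (⌊x⌋₊ : ℝ))) * g ⌊x⌋₊
      = (x - n) * g (n + 1) + (1 - (x - n)) * g n := by
  rcases eq_or_lt_of_le h1 with h | h
  · rw [← h]
    simp
  · rcases eq_or_lt_of_le h2 with h' | h'
    · have hx : x = ((n + 1 : ℕ) : ℝ) := by push_cast; linarith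
      rw [hx, Nat.floor_natCast, Nat.ceil_natCast]
      push_cast
      ring
    · have hf : ⌊x⌋₊ = n := by
        rw [Nat.floor_eq_iff (le_trans (Nat.cast_nonneg n) h1)]
        exact ⟨h1, h'⟩
      have hc : ⌈x⌉₊ = n + 1 := by
        rw [Nat.ceil_eq_iff (Nat.succ_ne_zero n)]
        constructor
        · push_cast; simpa using h
        · push_cast; linarith
      rw [hf, hc]

/-- The exchange step for two fixed fractional coordinates with ordered slopes. -/
lemma exchange (T B : ℕ) (g : Fin T → ℕ → ℝ)
    (d : Fin T → ℝ) (hd : ∀ t, 0 ≤ d t) (hdsum : ∑ t, d t = (B : ℝ))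
    (s₁ s₂ : Fin T) (hne : s₁ ≠ s₂)
    (h₁ : ¬ ∃ m : ℕ, d s₁ = (m : ℝ)) (h₂ : ¬ ∃ m : ℕ, d s₂ = (m : ℝ))
    (hs : g s₂ (⌊d s₂⌋₊ + 1) - g s₂ ⌊d s₂⌋₊ ≤ g s₁ (⌊d s₁⌋₊ + 1) - g s₁ ⌊d s₁⌋₊) :
    ∃ d' : Fin T → ℝ,
      (∀ t, 0 ≤ d' t) ∧ (∑ t, d' t = (B : ℝ)) ∧
      ({t | ∃ m : ℕ, d t = (m : ℝ)}.ncard < {t | ∃ m : ℕ, d' t = (m : ℝ)}.ncard) ∧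
      (∑ t, ((d t - (⌊d t⌋₊ : ℝ)) * g t ⌈d t⌉₊
              + (1 - (d t - (⌊d t⌋₊ : ℝ))) * g t ⌊d t⌋₊)
        ≤ ∑ t, ((d' t - (⌊d' t⌋₊ : ℝ)) * g t ⌈d' t⌉₊
              + (1 - (d' t - (⌊d' t⌋₊ : ℝ))) * g t ⌊d' t⌋₊)) ∧
      (∃ s₁ s₂ : Fin T, s₁ ≠ s₂ ∧ d' s₁ ≠ d s₁ ∧ d' s₂ ≠ d s₂ ∧
        ∀ t, t ≠ s₁ → t ≠ s₂ → d' t = d t) := by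
  classical
  have hls₁ : (⌊d s₁⌋₊ : ℝ) < d s₁ :=
    lt_of_le_of_ne (Nat.floor_le (hd s₁)) (fun h => h₁ ⟨⌊d s₁⌋₊, h.symm⟩)
  have hub₁ : d s₁ < (⌊d s₁⌋₊ : ℝ) + 1 := Nat.lt_floor_add_one _
  have hls₂ : (⌊d s₂⌋₊ : ℝ) < d s₂ :=
    lt_of_le_of_ne (Nat.floor_le (hd s₂)) (fun h => h₂ ⟨⌊d s₂⌋₊, h.symm⟩)
  have hub₂ : d s₂ < (⌊d s₂⌋₊ : ℝ) + 1 := Nat.lt_floor_add_one _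
  set ε := min ((⌊d s₁⌋₊ : ℝ) + 1 - d s₁) (d s₂ - (⌊d s₂⌋₊ : ℝ)) with hεdef
  have hε : 0 < ε := lt_min (by linarith) (by linarith)
  have hε1 : ε ≤ (⌊d s₁⌋₊ : ℝ) + 1 - d s₁ := min_le_left _ _
  have hε2 : ε ≤ d s₂ - (⌊d s₂⌋₊ : ℝ) := min_le_right _ _
  set d' : Fin T → ℝ := fun t => if t = s₁ then d s₁ + ε else if t = s₂ then d s₂ - ε else d t
    with hd'def
  have hd'1 : d' s₁ = d s₁ + ε := by simp [hd'def]
  have hd'2 : d' s₂ = d s₂ - ε := by simp [hd'def, hne.symm]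
  have hd'o : ∀ t, t ≠ s₁ → t ≠ s₂ → d' t = d t := by
    intro t h h2; simp [hd'def, h, h2]
  have hsplit : ∀ t, d' t = d t + ((if t = s₁ then ε else 0) - (if t = s₂ then ε else 0)) := by
    intro t
    by_cases h : t = s₁
    · rw [h, hd'1, if_pos rfl, if_neg hne]; ring
    · by_cases h2 : t = s₂
      · rw [h2, hd'2, if_neg (Ne.symm hne), if_pos rfl]; ring
      · rw [hd'o t h h2, if_neg h, if_neg h2]; ring
  refine ⟨d', ?_, ?_, ?_, ?_, s₁, s₂, hne, ?_, ?_, hd'o⟩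
  · intro t
    by_cases h : t = s₁
    · rw [h, hd'1]; linarith [hd s₁]
    · by_cases h2 : t = s₂
      · rw [h2, hd'2]; have := Nat.cast_nonneg (α := ℝ) ⌊d s₂⌋₊; linarith
      · rw [hd'o t h h2]; exact hd t
  · simp only [hsplit, Finset.sum_add_distrib, Finset.sum_sub_distrib, Finset.sum_ite_eq',
      Finset.mem_univ, if_pos, hdsum]
    ring
  · apply Set.ncard_lt_ncard _ (Set.toFinite _)
    have hSS' : {t | ∃ m : ℕ, d t = (m : ℝ)} ⊆ {t | ∃ m : ℕ, d' t = (m : ℝ)} := by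
      intro t ht
      obtain ⟨m, hm⟩ := ht
      have h : t ≠ s₁ := fun h => h₁ (h ▸ ⟨m, hm⟩)
      have h2 : t ≠ s₂ := fun h2 => h₂ (h2 ▸ ⟨m, hm⟩)
      exact ⟨m, by rw [hd'o t h h2]; exact hm⟩
    have hτ : s₁ ∈ {t | ∃ m : ℕ, d' t = (m : ℝ)} ∨ s₂ ∈ {t | ∃ m : ℕ, d' t = (m : ℝ)} := by
      rcases min_cases ((⌊d s₁⌋₊ : ℝ) + 1 - d s₁) (d s₂ - (⌊d s₂⌋₊ : ℝ)) with ⟨he, _⟩ | ⟨he, _⟩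
      · left; exact ⟨⌊d s₁⌋₊ + 1, by rw [hd'1]; push_cast; rw [hεdef, he]; ring⟩
      · right; exact ⟨⌊d s₂⌋₊, by rw [hd'2]; rw [hεdef, he]; ring⟩
    constructor
    · exact hSS'
    · intro hsub
      rcases hτ with hτ | hτ
      · exact h₁ (hsub hτ)
      · exact h₂ (hsub hτ)
  · have key : ∀ t, ((d' t - (⌊d' t⌋₊ : ℝ)) * g t ⌈d' t⌉₊
        + (1 - (d' t - (⌊d' t⌋₊ : ℝ))) * g t ⌊d' t⌋₊)
        = ((d t - (⌊d t⌋₊ : ℝ)) * g t ⌈d t⌉₊ + (1 - (d t - (⌊d t⌋₊ : ℝ))) * g t ⌊d t⌋₊)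
          + ((if t = s₁ then ε * (g s₁ (⌊d s₁⌋₊ + 1) - g s₁ ⌊d s₁⌋₊) else 0)
            - (if t = s₂ then ε * (g s₂ (⌊d s₂⌋₊ + 1) - g s₂ ⌊d s₂⌋₊) else 0)) := by
      intro t
      by_cases h : t = s₁
      · rw [h]
        simp only [eq_self_iff_true, ite_true, if_pos rfl, if_neg hne, hd'1]
        rw [Eeq (g s₁) ⌊d s₁⌋₊ (d s₁ + ε) (by linarith) (by linarith),
          Eeq (g s₁) ⌊d s₁⌋₊ (d s₁) (by linarith) (by linarith)]
        ring
      · by_cases h2 : t = s₂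
        · rw [h2]
          simp only [eq_self_iff_true, ite_true, if_pos rfl, if_neg (Ne.symm hne), hd'2]
          rw [Eeq (g s₂) ⌊d s₂⌋₊ (d s₂ - ε) (by linarith) (by linarith),
            Eeq (g s₂) ⌊d s₂⌋₊ (d s₂) (by linarith) (by linarith)]
          ring
        · simp [hd'o t h h2, h, h2]
    simp only [key, Finset.sum_add_distrib, Finset.sum_sub_distrib, Finset.sum_ite_eq',
      Finset.mem_univ, if_pos]
    have := mul_le_mul_of_nonneg_left hs hε.le
    linarith
  · rw [hd'1]; intro h; linarith
  · rw [hd'2]; intro h; linarith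

/-- The exchange step in the proof of Lemma 2 of the paper: if `d` is a vector of
nonnegative reals summing to the natural number `B` with at least one non-integer
coordinate, then there is a vector `d'` of nonnegative reals summing to `B`,
differing from `d` in exactly two coordinates, with strictly more integer
coordinates, and with total interpolated value
`∑ t, G_t (d' t) ≥ ∑ t, G_t (d t)`, where
`G_t d = (d − ⌊d⌋) * g_t ⌈d⌉ + (1 − (d − ⌊d⌋)) * g_t ⌊d⌋`. -/
theorem stmt1 (T B : ℕ) (hT : 1 ≤ T) (g : Fin T → ℕ → ℝ)
    (hg : ∀ t b, 0 ≤ g t b)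
    (d : Fin T → ℝ) (hd : ∀ t, 0 ≤ d t) (hdsum : ∑ t, d t = (B : ℝ))
    (hfrac : ∃ t, ¬ ∃ m : ℕ, d t = (m : ℝ)) :
    ∃ d' : Fin T → ℝ,
      (∀ t, 0 ≤ d' t) ∧ (∑ t, d' t = (B : ℝ)) ∧
      ({t | ∃ m : ℕ, d t = (m : ℝ)}.ncard < {t | ∃ m : ℕ, d' t = (m : ℝ)}.ncard) ∧
      (∑ t, ((d t - (⌊d t⌋₊ : ℝ)) * g t ⌈d t⌉₊
              + (1 - (d t - (⌊d t⌋₊ : ℝ))) * g t ⌊d t⌋₊)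
        ≤ ∑ t, ((d' t - (⌊d' t⌋₊ : ℝ)) * g t ⌈d' t⌉₊
              + (1 - (d' t - (⌊d' t⌋₊ : ℝ))) * g t ⌊d' t⌋₊)) ∧
      (∃ t₁ t₂ : Fin T, t₁ ≠ t₂ ∧ d' t₁ ≠ d t₁ ∧ d' t₂ ≠ d t₂ ∧
        ∀ t, t ≠ t₁ → t ≠ t₂ → d' t = d t) := by
  classical
  obtain ⟨t₁, h₁⟩ := hfrac
  have h2 : ∃ t₂, t₂ ≠ t₁ ∧ ¬ ∃ m : ℕ, d t₂ = (m : ℝ) := by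
    by_contra hcon
    push_neg at hcon
    let m : Fin T → ℕ := fun t => if h : t = t₁ then 0 else Classical.choose (hcon t h)
    have hm : ∀ t, t ≠ t₁ → d t = (m t : ℝ) := by
      intro t h
      simp only [m, dif_neg h]
      exact Classical.choose_spec (hcon t h)
    have hsum2 : d t₁ + ∑ t ∈ Finset.univ.erase t₁, d t = (B : ℝ) := by
      rw [Finset.add_sum_erase _ d (Finset.mem_univ t₁)]
      exact hdsum
    have hNat : ∑ t ∈ Finset.univ.erase t₁, d t
        = ((∑ t ∈ Finset.univ.erase t₁, m t : ℕ) : ℝ) := by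
      push_cast
      exact Finset.sum_congr rfl fun t ht => hm t (Finset.ne_of_mem_erase ht)
    set N := ∑ t ∈ Finset.univ.erase t₁, m t with hN
    have hd1 : d t₁ = (B : ℝ) - (N : ℝ) := by rw [hNat] at hsum2; linarith
    have hNB : N ≤ B := by
      have h0 := hd t₁
      rw [hd1] at h0
      have hle : (N : ℝ) ≤ (B : ℝ) := by linarith
      exact_mod_cast hle
    exact h₁ ⟨B - N, by rw [hd1, Nat.cast_sub hNB]⟩
  obtain ⟨t₂, hne, h₂⟩ := h2
  by_cases hs : g t₂ (⌊d t₂⌋₊ + 1) - g t₂ ⌊d t₂⌋₊ ≤ g t₁ (⌊d t₁⌋₊ + 1) - g t₁ ⌊d t₁⌋₊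
  · exact exchange T B g d hd hdsum t₁ t₂ hne.symm h₁ h₂ hs
  · exact exchange T B g d hd hdsum t₂ t₁ hne h₂ h₁ (le_of_not_ge hs)
end

section
/- Let Δ : {1,...,T} × {0,...,n−1} → ℝ be such that each row is nonincreasing, i.e., Δ(t,j) ≤ Δ(t,i) whenever i ≤ j ≤ n−1. Let b be an allocation satisfying the local greedy-optimality condition: for all rounds t₁, t₂, if b_{t₁} ≥ 1 and b_{t₂} < n then Δ(t₁, b_{t₁} − 1) ≥ Δ(t₂, b_{t₂}). Then for every allocation b' (with the same total budget B), ∑_{t=1}^{T} ∑_{i=0}^{b'_t − 1} Δ(t,i) ≤ ∑_{t=1}^{T} ∑_{i=0}^{b_t − 1} Δ(t,i). -/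
/-- Per-round exchange bound: if `c` is nonincreasing on `[0, n-1]`, `m, k ≤ n`,
and `lam` separates `c (m-1)` (above) from `c m` (below), then changing the
budget from `m` to `k` gains at most `lam * (k - m)`. -/
lemma stmt2_aux (n m k : ℕ) (c : ℕ → ℝ)
    (hmono : ∀ i j : ℕ, i ≤ j → j ≤ n - 1 → c j ≤ c i)
    (hm : m ≤ n) (hk : k ≤ n) (lam : ℝ)
    (h1 : 1 ≤ m → lam ≤ c (m - 1)) (h2 : m < n → c m ≤ lam) :
    ∑ i ∈ Finset.range k, c i ≤ ∑ i ∈ Finset.range m, c i + lam * ((k : ℝ) - m) := by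
  rcases le_or_gt m k with hmk | hkm
  · rw [← Finset.sum_range_add_sum_Ico c hmk]
    have hcard : (Finset.Ico m k).card = k - m := Nat.card_Ico m k
    have hbound : ∑ i ∈ Finset.Ico m k, c i ≤ (k - m) • lam := by
      rw [← hcard]
      apply Finset.sum_le_card_nsmul
      intro i hi
      rw [Finset.mem_Ico] at hi
      have hin : i ≤ n - 1 := Nat.le_sub_one_of_lt (lt_of_lt_of_le hi.2 hk)
      have hmn : m < n := lt_of_le_of_lt hi.1 (lt_of_lt_of_le hi.2 hk)
      exact le_trans (hmono m i hi.1 hin) (h2 hmn)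
    have hcast : ((k - m : ℕ) : ℝ) = (k : ℝ) - m := by
      push_cast [Nat.cast_sub hmk]; ring
    calc ∑ i ∈ Finset.range m, c i + ∑ i ∈ Finset.Ico m k, c i
        ≤ ∑ i ∈ Finset.range m, c i + (k - m) • lam := by linarith
      _ = ∑ i ∈ Finset.range m, c i + lam * ((k : ℝ) - m) := by
          rw [nsmul_eq_mul, hcast]; ring
  · have hkm' : k ≤ m := le_of_lt hkm
    rw [← Finset.sum_range_add_sum_Ico c hkm']
    have hcard : (Finset.Ico k m).card = m - k := Nat.card_Ico k m
    have hbound : (m - k) • lam ≤ ∑ i ∈ Finset.Ico k m, c i := by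
      rw [← hcard]
      apply Finset.card_nsmul_le_sum
      intro i hi
      rw [Finset.mem_Ico] at hi
      have hm1 : 1 ≤ m := le_trans (Nat.one_le_iff_ne_zero.mpr (by omega)) le_rfl
      have hin : i ≤ m - 1 := Nat.le_sub_one_of_lt hi.2
      have hmn : m - 1 ≤ n - 1 := by omega
      exact le_trans (h1 hm1) (hmono i (m - 1) hin hmn)
    have hcast : ((m - k : ℕ) : ℝ) = (m : ℝ) - k := by
      push_cast [Nat.cast_sub hkm']; ring
    rw [nsmul_eq_mul, hcast] at hbound
    linarith

/-- Lemma 4 of the paper (combinatorial content): if the per-round marginal gains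
`Δ t i` (for `i ≤ n - 1`) are nonincreasing in `i` for each round `t`, and the
allocation `b` satisfies the local greedy-optimality condition, then `b` maximizes
the total value `∑ t, ∑ i < b t, Δ t i` among all allocations of total budget `B`
with at most `n` units per round. -/
theorem stmt2 (T n B : ℕ) (hT : 1 ≤ T) (hn : 1 ≤ n) (hB : B ≤ n * T)
    (Δ : Fin T → ℕ → ℝ)
    (hmono : ∀ t : Fin T, ∀ i j : ℕ, i ≤ j → j ≤ n - 1 → Δ t j ≤ Δ t i)
    (b : Fin T → ℕ) (hb : ∀ t, b t ≤ n) (hbsum : ∑ t, b t = B)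
    (hgreedy : ∀ t₁ t₂ : Fin T, 1 ≤ b t₁ → b t₂ < n →
      Δ t₂ (b t₂) ≤ Δ t₁ (b t₁ - 1))
    (b' : Fin T → ℕ) (hb' : ∀ t, b' t ≤ n) (hb'sum : ∑ t, b' t = B) :
    ∑ t, ∑ i ∈ Finset.range (b' t), Δ t i ≤ ∑ t, ∑ i ∈ Finset.range (b t), Δ t i := by
  classical
  by_cases hall : ∀ t, b t = n
  · -- then b' t = n for all t as well, so the two allocations coincide
    have hsum' : ∑ t : Fin T, b' t = ∑ t : Fin T, b t := by rw [hbsum, hb'sum]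
    have : ∀ t ∈ Finset.univ, b' t = b t := by
      rw [← Finset.sum_eq_sum_iff_of_le (fun t _ => (hb' t).trans_eq (hall t).symm)]
      exact hsum'
    apply le_of_eq
    exact Finset.sum_congr rfl (fun t ht => by rw [this t ht])
  · push_neg at hall
    obtain ⟨t₀, ht₀⟩ := hall
    have ht₀' : b t₀ < n := lt_of_le_of_ne (hb t₀) ht₀
    set S : Finset (Fin T) := Finset.univ.filter (fun t => b t < n) with hS
    have hSne : S.Nonempty := ⟨t₀, Finset.mem_filter.mpr ⟨Finset.mem_univ _, ht₀'⟩⟩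
    set lam : ℝ := S.sup' hSne (fun t => Δ t (b t)) with hlam
    have h2 : ∀ t : Fin T, b t < n → Δ t (b t) ≤ lam := by
      intro t ht
      have htS : t ∈ S := Finset.mem_filter.mpr ⟨Finset.mem_univ t, ht⟩
      exact Finset.le_sup' (fun t => Δ t (b t)) htS
    have h1 : ∀ t : Fin T, 1 ≤ b t → lam ≤ Δ t (b t - 1) := by
      intro t ht
      apply Finset.sup'_le
      intro t₂ ht₂
      rw [hS, Finset.mem_filter] at ht₂
      exact hgreedy t t₂ ht ht₂.2
    have key : ∀ t : Fin T,
        ∑ i ∈ Finset.range (b' t), Δ t i ≤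
          ∑ i ∈ Finset.range (b t), Δ t i + lam * ((b' t : ℝ) - b t) := by
      intro t
      exact stmt2_aux n (b t) (b' t) (Δ t) (hmono t) (hb t) (hb' t) lam
        (h1 t) (h2 t)
    calc ∑ t, ∑ i ∈ Finset.range (b' t), Δ t i
        ≤ ∑ t, (∑ i ∈ Finset.range (b t), Δ t i + lam * ((b' t : ℝ) - b t)) :=
          Finset.sum_le_sum (fun t _ => key t)
      _ = ∑ t, ∑ i ∈ Finset.range (b t), Δ t i
            + lam * (∑ t, ((b' t : ℝ)) - ∑ t, ((b t : ℝ))) := by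
          rw [Finset.sum_add_distrib, ← Finset.mul_sum, Finset.sum_sub_distrib]
      _ = ∑ t, ∑ i ∈ Finset.range (b t), Δ t i := by
          have : (∑ t, ((b' t : ℝ))) - ∑ t, ((b t : ℝ)) = 0 := by
            push_cast [← Nat.cast_sum]
            rw [hbsum, hb'sum]; ring
          rw [this, mul_zero, add_zero]
end

section
/- Let b ≥ 1 be a natural number, let O ≥ 0 and c ≥ 0 be real numbers, and let g : ℕ → ℝ satisfy g(0) = 0 and g(i) ≥ O/b + (1 − 1/b)·g(i−1) − c for every i ∈ {1,...,b}. Then g(b) ≥ (1 − (1 − 1/b)^b)·O − b·c, and consequently g(b) ≥ (1 − 1/e)·O − b·c. -/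
/-- The recursion-unrolling argument at the core of Lemmas 3 and 5 of the paper:
if `g 0 = 0` and `g i ≥ O / b + (1 - 1/b) * g (i-1) - c` for all `1 ≤ i ≤ b`, then
`g b ≥ (1 - (1 - 1/b)^b) * O - b * c ≥ (1 - 1/e) * O - b * c`. -/
theorem stmt3 (b : ℕ) (hb : 1 ≤ b) (O c : ℝ) (hO : 0 ≤ O) (hc : 0 ≤ c)
    (g : ℕ → ℝ) (hg0 : g 0 = 0)
    (hrec : ∀ i : ℕ, 1 ≤ i → i ≤ b →
      O / (b : ℝ) + (1 - 1 / (b : ℝ)) * g (i - 1) - c ≤ g i) :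
    (1 - (1 - 1 / (b : ℝ)) ^ b) * O - (b : ℝ) * c ≤ g b ∧
    (1 - 1 / Real.exp 1) * O - (b : ℝ) * c ≤ g b := by
  have hb1 : (1 : ℝ) ≤ (b : ℝ) := by exact_mod_cast hb
  have hbpos : (0 : ℝ) < (b : ℝ) := lt_of_lt_of_le one_pos hb1
  set x : ℝ := 1 - 1 / (b : ℝ) with hx
  have hx0 : 0 ≤ x := by
    have : 1 / (b : ℝ) ≤ 1 := by
      rw [div_le_one hbpos]; exact hb1
    rw [hx]; linarith
  have hx1 : x ≤ 1 := by
    have : 0 ≤ 1 / (b : ℝ) := by positivity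
    simp only [hx]; linarith
  have hOb : O / (b : ℝ) = (1 - x) * O := by
    rw [hx]; ring
  have key : ∀ i : ℕ, i ≤ b → (1 - x ^ i) * O - (i : ℝ) * c ≤ g i := by
    intro i
    induction i with
    | zero => intro _; simp [hg0]
    | succ n ih =>
      intro hnb
      have hn : n ≤ b := Nat.le_of_succ_le hnb
      have h1 := ih hn
      have h2 := hrec (n + 1) (Nat.le_add_left 1 n) hnb
      simp only [Nat.add_sub_cancel] at h2
      have h3 : x * ((1 - x ^ n) * O - (n : ℝ) * c) ≤ x * g n :=
        mul_le_mul_of_nonneg_left h1 hx0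
      have hxn : x * ((n : ℝ) * c) ≤ (n : ℝ) * c := by
        have hnc : 0 ≤ (n : ℝ) * c := by positivity
        nlinarith
      have : (1 - x ^ (n + 1)) * O - ((n : ℝ) + 1) * c ≤
          O / (b : ℝ) + x * g n - c := by
        rw [hOb]; ring_nf; ring_nf at h3 hxn; nlinarith
      calc (1 - x ^ (n + 1)) * O - ((n + 1 : ℕ) : ℝ) * c
          = (1 - x ^ (n + 1)) * O - ((n : ℝ) + 1) * c := by push_cast; ring
        _ ≤ O / (b : ℝ) + x * g n - c := this
        _ ≤ g (n + 1) := h2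
  have hmain := key b le_rfl
  refine ⟨hmain, ?_⟩
  have hxe : x ^ b ≤ 1 / Real.exp 1 := by
    have h1 : x ≤ Real.exp (-(1 / (b : ℝ))) := by
      have := Real.add_one_le_exp (-(1 / (b : ℝ)))
      simp only [hx]; linarith
    have h2 : x ^ b ≤ Real.exp (-(1 / (b : ℝ))) ^ b :=
      pow_le_pow_left₀ hx0 h1 b
    have h3 : Real.exp (-(1 / (b : ℝ))) ^ b = Real.exp ((b : ℝ) * (-(1 / (b : ℝ)))) := by
      rw [← Real.exp_nat_mul]
    have h4 : (b : ℝ) * (-(1 / (b : ℝ))) = -1 := by field_simp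
    rw [h3, h4, Real.exp_neg] at h2
    rw [one_div]; exact h2
  have : (1 - 1 / Real.exp 1) * O ≤ (1 - x ^ b) * O := by
    apply mul_le_mul_of_nonneg_right _ hO
    linarith
  linarith
end

section
/- Let T, n, B be natural numbers with B ≤ n·T, let δ ≥ 0 and ε ≥ 0 be reals, and let Δ, Δ̃ : {1,...,T} × {0,...,n−1} → ℝ satisfy: (i) Δ(t,i) ≤ Δ(t,j) + ε whenever j ≤ i ≤ n−1 (near-nonincreasing rows), and (ii) |Δ̃(t,i) − Δ(t,i)| ≤ δ for all t and all i ≤ n−1. Define Δ̄(t,i) := min_{j ≤ i} Δ̃(t,j). Then: (a) Δ̄(t,i) ≤ Δ(t,i) + δ and Δ(t,i) ≤ Δ̄(t,i) + δ + ε for all t and i ≤ n−1; and (b) if b is an allocation maximizing ∑_{t=1}^T ∑_{i=0}^{b_t−1} Δ̄(t,i) among all allocations, then every allocation b' satisfies ∑_{t=1}^T ∑_{i=0}^{b'_t−1} Δ(t,i) ≤ ∑_{t=1}^T ∑_{i=0}^{b_t−1} Δ(t,i) + B·(2δ + ε). -/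
/-- The deterministic core of Lemma 6 of the paper: given true marginal gains `Δ`
with near-nonincreasing rows (up to an additive `ε`) and estimates `Δt` that are
`δ`-accurate, the running minima `Δbar t i = min_{j ≤ i} Δt t j` satisfy
`Δbar ≤ Δ + δ` and `Δ ≤ Δbar + δ + ε`; and any allocation `b` maximizing the total
estimated value `∑ t, ∑ i < b t, Δbar t i` loses at most `B (2δ + ε)` in true
value with respect to any other allocation `b'`. -/
theorem stmt7 (T n B : ℕ) (hT : 1 ≤ T) (hn : 1 ≤ n) (hB : B ≤ n * T)
    (δ ε : ℝ) (hδ : 0 ≤ δ) (hε : 0 ≤ ε)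
    (Δ Δt : Fin T → ℕ → ℝ)
    (hmono : ∀ t : Fin T, ∀ i j : ℕ, j ≤ i → i ≤ n - 1 → Δ t i ≤ Δ t j + ε)
    (hacc : ∀ t : Fin T, ∀ i : ℕ, i ≤ n - 1 → |Δt t i - Δ t i| ≤ δ)
    (Δbar : Fin T → ℕ → ℝ)
    (hΔbar : ∀ t i, Δbar t i =
      (Finset.range (i + 1)).inf' (Finset.nonempty_range_iff.mpr (Nat.succ_ne_zero i)) (Δt t)) :
    (∀ t : Fin T, ∀ i : ℕ, i ≤ n - 1 →
        Δbar t i ≤ Δ t i + δ ∧ Δ t i ≤ Δbar t i + δ + ε) ∧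
    (∀ b : Fin T → ℕ, (∀ t, b t ≤ n) → (∑ t, b t = B) →
      (∀ b'' : Fin T → ℕ, (∀ t, b'' t ≤ n) → (∑ t, b'' t = B) →
        ∑ t, ∑ i ∈ Finset.range (b'' t), Δbar t i ≤
          ∑ t, ∑ i ∈ Finset.range (b t), Δbar t i) →
      ∀ b' : Fin T → ℕ, (∀ t, b' t ≤ n) → (∑ t, b' t = B) →
        ∑ t, ∑ i ∈ Finset.range (b' t), Δ t i ≤
          ∑ t, ∑ i ∈ Finset.range (b t), Δ t i + B * (2 * δ + ε)) := by
  have key : ∀ t : Fin T, ∀ i : ℕ, i ≤ n - 1 →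
      Δbar t i ≤ Δ t i + δ ∧ Δ t i ≤ Δbar t i + δ + ε := by
    intro t i hi
    constructor
    · rw [hΔbar]
      have h1 : (Finset.range (i+1)).inf'
          (Finset.nonempty_range_iff.mpr (Nat.succ_ne_zero i)) (Δt t) ≤ Δt t i :=
        Finset.inf'_le _ (Finset.self_mem_range_succ i)
      have h2 := abs_le.mp (hacc t i hi)
      linarith [h2.1, h2.2]
    · rw [hΔbar]
      obtain ⟨j, hj, hjeq⟩ := Finset.exists_mem_eq_inf'
        (Finset.nonempty_range_iff.mpr (Nat.succ_ne_zero i)) (Δt t)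
      rw [hjeq]
      have hji : j ≤ i := Nat.lt_succ_iff.mp (Finset.mem_range.mp hj)
      have h1 := hmono t i j hji hi
      have h2 := abs_le.mp (hacc t j (le_trans hji hi))
      linarith [h2.1, h2.2]
  refine ⟨key, ?_⟩
  intro b hb hbsum hmax b' hb' hb'sum
  have hbound : ∀ (c : Fin T → ℕ), (∀ t, c t ≤ n) → (∑ t, c t = B) →
      (∑ t, ∑ i ∈ Finset.range (c t), Δ t i ≤
        ∑ t, ∑ i ∈ Finset.range (c t), Δbar t i + (B : ℝ) * (δ + ε)) ∧
      (∑ t, ∑ i ∈ Finset.range (c t), Δbar t i ≤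
        ∑ t, ∑ i ∈ Finset.range (c t), Δ t i + (B : ℝ) * δ) := by
    intro c hc hcsum
    have hle : ∀ t : Fin T, ∀ i ∈ Finset.range (c t), i ≤ n - 1 := by
      intro t i hi
      have h1 := Finset.mem_range.mp hi
      have h2 := hc t
      omega
    have hcast : ∑ t, ((c t : ℝ)) = (B : ℝ) := by
      rw [← hcsum]; push_cast; ring
    constructor
    · calc ∑ t, ∑ i ∈ Finset.range (c t), Δ t i
          ≤ ∑ t, (∑ i ∈ Finset.range (c t), Δbar t i + (c t : ℝ) * (δ + ε)) := by
            refine Finset.sum_le_sum fun t _ => ?_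
            calc ∑ i ∈ Finset.range (c t), Δ t i
                ≤ ∑ i ∈ Finset.range (c t), (Δbar t i + (δ + ε)) :=
                  Finset.sum_le_sum fun i hi => by linarith [(key t i (hle t i hi)).2]
              _ = ∑ i ∈ Finset.range (c t), Δbar t i + (c t : ℝ) * (δ + ε) := by
                  rw [Finset.sum_add_distrib, Finset.sum_const, Finset.card_range,
                    nsmul_eq_mul]
        _ = ∑ t, ∑ i ∈ Finset.range (c t), Δbar t i + (∑ t, (c t : ℝ)) * (δ + ε) := by
            rw [Finset.sum_add_distrib, Finset.sum_mul]
        _ = _ := by rw [hcast]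
    · calc ∑ t, ∑ i ∈ Finset.range (c t), Δbar t i
          ≤ ∑ t, (∑ i ∈ Finset.range (c t), Δ t i + (c t : ℝ) * δ) := by
            refine Finset.sum_le_sum fun t _ => ?_
            calc ∑ i ∈ Finset.range (c t), Δbar t i
                ≤ ∑ i ∈ Finset.range (c t), (Δ t i + δ) :=
                  Finset.sum_le_sum fun i hi => (key t i (hle t i hi)).1
              _ = ∑ i ∈ Finset.range (c t), Δ t i + (c t : ℝ) * δ := by
                  rw [Finset.sum_add_distrib, Finset.sum_const, Finset.card_range,
                    nsmul_eq_mul]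
        _ = ∑ t, ∑ i ∈ Finset.range (c t), Δ t i + (∑ t, (c t : ℝ)) * δ := by
            rw [Finset.sum_add_distrib, Finset.sum_mul]
        _ = _ := by rw [hcast]
  have h1 := (hbound b' hb' hb'sum).1
  have h2 := (hbound b hb hbsum).2
  have h3 := hmax b' hb' hb'sum
  nlinarith [h1, h2, h3]
end

section
/- Let Δ : {1,...,T} × {0,...,n−1} → ℝ be such that each row is nonincreasing, i.e., Δ(t,j) ≤ Δ(t,i) whenever i ≤ j ≤ n−1, and let B ≤ n·T. Then there exists an allocation b = (b_1,...,b_T) (natural numbers with b_t ≤ n and ∑_t b_t = B) satisfying the local greedy-optimality condition: for all t₁, t₂, if b_{t₁} ≥ 1 and b_{t₂} < n then Δ(t₁, b_{t₁} − 1) ≥ Δ(t₂, b_{t₂}). -/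
lemma stmt11_aux (T n : ℕ) (hn : 1 ≤ n)
    (Δ : Fin T → ℕ → ℝ)
    (hmono : ∀ t : Fin T, ∀ i j : ℕ, i ≤ j → j ≤ n - 1 → Δ t j ≤ Δ t i) :
    ∀ B : ℕ, B ≤ n * T → ∃ b : Fin T → ℕ, (∀ t, b t ≤ n) ∧ (∑ t, b t = B) ∧
      ∀ t₁ t₂ : Fin T, 1 ≤ b t₁ → b t₂ < n →
        Δ t₂ (b t₂) ≤ Δ t₁ (b t₁ - 1) := by
  intro B
  induction B with
  | zero =>
    intro _
    exact ⟨fun _ => 0, fun _ => Nat.zero_le n, by simp, fun t₁ t₂ h1 _ => absurd h1 (by simp)⟩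
  | succ B ih =>
    intro hB
    obtain ⟨b, hle, hsum, hgr⟩ := ih (Nat.le_of_succ_le hB)
    -- there is some t with b t < n
    have hne : ({t : Fin T | b t < n} : Finset (Fin T)).Nonempty := by
      by_contra h
      rw [Finset.not_nonempty_iff_eq_empty] at h
      have hall : ∀ t : Fin T, b t = n := by
        intro t
        have : t ∉ ({t : Fin T | b t < n} : Finset (Fin T)) := by simp [h]
        simp only [Finset.mem_filter, Finset.mem_univ, true_and, not_lt,
          Finset.mem_coe] at this
        have := hle t
        omega
      have : ∑ t : Fin T, b t = n * T := by
        rw [Finset.sum_congr rfl (fun t _ => hall t)]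
        simp [Finset.card_univ, mul_comm]
      omega
    obtain ⟨s, hs, hmax⟩ := Finset.exists_max_image _ (fun t => Δ t (b t)) hne
    simp only [Finset.mem_filter, Finset.mem_univ, true_and] at hs
    have hmax' : ∀ t : Fin T, b t < n → Δ t (b t) ≤ Δ s (b s) := by
      intro t ht
      exact hmax t (by simp [ht])
    refine ⟨Function.update b s (b s + 1), ?_, ?_, ?_⟩
    · intro t
      rcases eq_or_ne t s with rfl | hts
      · simp; omega
      · simp [Function.update_of_ne hts]; exact hle t
    · rw [Finset.sum_update_of_mem (Finset.mem_univ s), Finset.sdiff_singleton_eq_erase,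
        ← Finset.add_sum_erase _ b (Finset.mem_univ s)] at *
      omega
    · intro t₁ t₂ h1 h2
      have key : ∀ t, b t < n → Δ t (b t + 1 - 1) = Δ t (b t) := by intro t _; simp
      rcases eq_or_ne t₁ s with rfl | h1s
      · rw [Function.update_self] at h1 ⊢
        have hΔ1 : Δ t₁ (b t₁ + 1 - 1) = Δ t₁ (b t₁) := by simp
        rw [hΔ1]
        rcases eq_or_ne t₂ t₁ with rfl | h2s
        · rw [Function.update_self] at h2 ⊢
          exact hmono t₂ (b t₂) (b t₂ + 1) (by omega) (by omega)
        · rw [Function.update_of_ne h2s] at h2 ⊢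
          exact hmax' t₂ h2
      · rw [Function.update_of_ne h1s] at h1 ⊢
        rcases eq_or_ne t₂ s with rfl | h2s
        · rw [Function.update_self] at h2 ⊢
          calc Δ t₂ (b t₂ + 1) ≤ Δ t₂ (b t₂) :=
                hmono t₂ (b t₂) (b t₂ + 1) (by omega) (by omega)
            _ ≤ Δ t₁ (b t₁ - 1) := hgr t₁ t₂ h1 (by omega)
        · rw [Function.update_of_ne h2s] at h2 ⊢
          exact hgr t₁ t₂ h1 h2

/-- Existence of a greedily optimal budget allocation (as produced by the paper's
procedure BudgetGr): if the marginal gains `Δ t i` (for `i ≤ n - 1`) are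
nonincreasing in `i` for each round `t`, and `B ≤ n·T`, then there is an
allocation `b` with `b t ≤ n` for all `t` and `∑ t, b t = B` satisfying the local
greedy-optimality condition: whenever `b t₁ ≥ 1` and `b t₂ < n`,
`Δ t₁ (b t₁ - 1) ≥ Δ t₂ (b t₂)`. -/
theorem stmt11 (T n B : ℕ) (hT : 1 ≤ T) (hn : 1 ≤ n) (hB : B ≤ n * T)
    (Δ : Fin T → ℕ → ℝ)
    (hmono : ∀ t : Fin T, ∀ i j : ℕ, i ≤ j → j ≤ n - 1 → Δ t j ≤ Δ t i) :
    ∃ b : Fin T → ℕ, (∀ t, b t ≤ n) ∧ (∑ t, b t = B) ∧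
      ∀ t₁ t₂ : Fin T, 1 ≤ b t₁ → b t₂ < n →
        Δ t₂ (b t₂) ≤ Δ t₁ (b t₁ - 1) := by
  exact stmt11_aux T n hn Δ hmono B hB
end
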